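/- Let (Ω₀, 𝔉, μ) be a probability space, H a real separable Hilbert space, ψ : Ω₀ → H strongly measurable with E‖ψ‖² < ∞, and Y : Ω₀ → Ω Borel measurable into a metric space (Ω, d) with ∫∫ d(Y(ω), Y(ω'))² d(μ⊗μ) < ∞. Set μ_ψ = E[ψ] (Bochner integral), η = ψ − μ_ψ, and for u, v ∈ H let u ⊗ v denote the rank-one bounded operator h ↦ ⟨v, h⟩·u on H. Then the function (ω, ω') ↦ (η(ω) ⊗ η(ω'))·d(Y(ω), Y(ω')) is Bochner integrable with respect to μ ⊗ μ in the Banach space of bounded operators on H, and the operator Λ = −∫∫ (η(ω) ⊗ η(ω'))·d(Y(ω), Y(ω')) d(μ⊗μ) satisfies the operator-norm bound ‖Λ‖ ≤ (E‖η‖²)·(E[d(Y, Y')²])^{1/2}; in particular Λ is a bounded linear operator. -/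

import Mathlib

open MeasureTheory

set_option maxHeartbeats 1000000
set_option synthInstance.maxHeartbeats 400000

/-- The weighted inverse regression ensemble operator
`Λ = −E[(η ⊗ η')·d(Y, Y')]` (with `η = ψ − E ψ` a centered Hilbert-space feature and
`u ⊗ v : h ↦ ⟨v, h⟩ • u` a rank-one operator) is given by a Bochner integral in the Banach
space of bounded operators, and satisfies `‖Λ‖ ≤ (E‖η‖²)·(E[d(Y,Y')²])^{1/2}`. -/
theorem stmt_2 {Ω₀ : Type*} [MeasurableSpace Ω₀] (μ : Measure Ω₀) [IsProbabilityMeasure μ]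
    {H : Type*} [NormedAddCommGroup H] [InnerProductSpace ℝ H] [CompleteSpace H]
    [SecondCountableTopology H]
    {Ω : Type*} [MetricSpace Ω] [MeasurableSpace Ω] [BorelSpace Ω]
    (ψ : Ω₀ → H) (Y : Ω₀ → Ω)
    (hψ : StronglyMeasurable ψ) (hY : Measurable Y)
    (hψ2 : Integrable (fun ω => ‖ψ ω‖ ^ 2) μ)
    (hd2 : Integrable (fun q : Ω₀ × Ω₀ => dist (Y q.1) (Y q.2) ^ 2) (μ.prod μ))
    (η : Ω₀ → H) (hη : η = fun ω => ψ ω - ∫ ω', ψ ω' ∂μ) :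
    Integrable (fun q : Ω₀ × Ω₀ =>
        dist (Y q.1) (Y q.2) • ((innerSL ℝ (η q.2)).smulRight (η q.1))) (μ.prod μ) ∧
      ‖-∫ q : Ω₀ × Ω₀,
            dist (Y q.1) (Y q.2) • ((innerSL ℝ (η q.2)).smulRight (η q.1)) ∂(μ.prod μ)‖
        ≤ (∫ ω, ‖η ω‖ ^ 2 ∂μ) *
            Real.sqrt (∫ q : Ω₀ × Ω₀, dist (Y q.1) (Y q.2) ^ 2 ∂(μ.prod μ)) := by
  -- basic measurability facts
  have hηm : StronglyMeasurable η := by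
    rw [hη]; exact hψ.sub stronglyMeasurable_const
  -- integrability of ‖η‖²
  have hη2 : Integrable (fun ω => ‖η ω‖ ^ 2) μ := by
    have hb : ∀ ω, ‖η ω‖ ^ 2 ≤ 2 * ‖ψ ω‖ ^ 2 + 2 * ‖∫ ω', ψ ω' ∂μ‖ ^ 2 := by
      intro ω
      have h1 : ‖η ω‖ ≤ ‖ψ ω‖ + ‖∫ ω', ψ ω' ∂μ‖ := by
        rw [hη]; exact norm_sub_le _ _
      nlinarith [norm_nonneg (η ω), norm_nonneg (ψ ω), norm_nonneg (∫ ω', ψ ω' ∂μ),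
        sq_nonneg (‖ψ ω‖ - ‖∫ ω', ψ ω' ∂μ‖)]
    refine Integrable.mono'
      (g := fun ω => 2 * ‖ψ ω‖ ^ 2 + 2 * ‖∫ ω', ψ ω' ∂μ‖ ^ 2)
      ((hψ2.const_mul 2).add (integrable_const (2 * ‖∫ ω', ψ ω' ∂μ‖ ^ 2))) ?_ ?_
    · exact ((hηm.norm.pow 2).aestronglyMeasurable)
    · filter_upwards with ω
      simpa [Real.norm_of_nonneg (sq_nonneg ‖η ω‖)] using hb ω
  have hdm : AEStronglyMeasurable (fun q : Ω₀ × Ω₀ => dist (Y q.1) (Y q.2)) (μ.prod μ) := by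
    have h1 := Real.continuous_sqrt.comp_aestronglyMeasurable hd2.aestronglyMeasurable
    have h2 : (fun q : Ω₀ × Ω₀ => Real.sqrt (dist (Y q.1) (Y q.2) ^ 2))
        = fun q : Ω₀ × Ω₀ => dist (Y q.1) (Y q.2) := by
      funext q; exact Real.sqrt_sq dist_nonneg
    rwa [h2] at h1
  -- strong measurability of the operator-valued integrand
  have hopm : StronglyMeasurable fun q : Ω₀ × Ω₀ =>
      (innerSL ℝ (η q.2)).smulRight (η q.1) := by
    have hc : Continuous fun p : H × H => (innerSL ℝ p.2).smulRight p.1 := by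
      have h1 : Continuous fun p : (H →L[ℝ] ℝ) × H =>
          ContinuousLinearMap.smulRightL ℝ H H p.1 p.2 :=
        (ContinuousLinearMap.smulRightL ℝ H H).continuous₂
      exact h1.comp (((innerSL ℝ (E := H)).continuous.comp continuous_snd).prodMk
        continuous_fst)
    exact hc.comp_stronglyMeasurable
      ((hηm.comp_measurable measurable_fst).prodMk (hηm.comp_measurable measurable_snd))
  have hFm : AEStronglyMeasurable (fun q : Ω₀ × Ω₀ =>
      dist (Y q.1) (Y q.2) • ((innerSL ℝ (η q.2)).smulRight (η q.1))) (μ.prod μ) :=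
    hdm.smul hopm.aestronglyMeasurable
  -- the pointwise norm
  have hnorm : ∀ q : Ω₀ × Ω₀,
      ‖dist (Y q.1) (Y q.2) • ((innerSL ℝ (η q.2)).smulRight (η q.1))‖
        = dist (Y q.1) (Y q.2) * (‖η q.1‖ * ‖η q.2‖) := by
    intro q
    rw [norm_smul (dist (Y q.1) (Y q.2)) ((innerSL ℝ (η q.2)).smulRight (η q.1)),
      Real.norm_of_nonneg dist_nonneg,
      ContinuousLinearMap.norm_smulRight_apply, innerSL_apply_norm]
    ring
  -- integrability of the product of squared norms on the product space
  have hab2 : Integrable (fun q : Ω₀ × Ω₀ => ‖η q.1‖ ^ 2 * ‖η q.2‖ ^ 2) (μ.prod μ) :=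
    hη2.mul_prod hη2
  -- integrability of the integrand
  have hint : Integrable (fun q : Ω₀ × Ω₀ =>
      dist (Y q.1) (Y q.2) • ((innerSL ℝ (η q.2)).smulRight (η q.1))) (μ.prod μ) := by
    refine Integrable.mono'
      ((hd2.add hab2).div_const 2) hFm ?_
    filter_upwards with q
    rw [hnorm q]
    have h1 := dist_nonneg (x := Y q.1) (y := Y q.2)
    have h2 : (0:ℝ) ≤ ‖η q.1‖ * ‖η q.2‖ := mul_nonneg (norm_nonneg _) (norm_nonneg _)
    have key : dist (Y q.1) (Y q.2) * (‖η q.1‖ * ‖η q.2‖)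
        ≤ (dist (Y q.1) (Y q.2) ^ 2 + ‖η q.1‖ ^ 2 * ‖η q.2‖ ^ 2) / 2 := by
      nlinarith [sq_nonneg (dist (Y q.1) (Y q.2) - ‖η q.1‖ * ‖η q.2‖)]
    simpa using key
  refine ⟨hint, ?_⟩
  have hg2 : Integrable (fun q : Ω₀ × Ω₀ => (‖η q.1‖ * ‖η q.2‖) ^ 2) (μ.prod μ) := by
    simpa [mul_pow] using hab2
  -- Cauchy–Schwarz (Hölder with p = q = 2)
  have hCS : ∫ q : Ω₀ × Ω₀, dist (Y q.1) (Y q.2) * (‖η q.1‖ * ‖η q.2‖) ∂(μ.prod μ)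
      ≤ (∫ q : Ω₀ × Ω₀, dist (Y q.1) (Y q.2) ^ (2:ℝ) ∂(μ.prod μ)) ^ ((1:ℝ)/2) *
        (∫ q : Ω₀ × Ω₀, (‖η q.1‖ * ‖η q.2‖) ^ (2:ℝ) ∂(μ.prod μ)) ^ ((1:ℝ)/2) := by
    have hpq : Real.HolderConjugate 2 2 := Real.holderConjugate_iff.mpr ⟨one_lt_two, by norm_num⟩
    have hfm : AEStronglyMeasurable (fun q : Ω₀ × Ω₀ => dist (Y q.1) (Y q.2)) (μ.prod μ) :=
      hdm
    have hgm : AEStronglyMeasurable (fun q : Ω₀ × Ω₀ => ‖η q.1‖ * ‖η q.2‖) (μ.prod μ) :=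
      ((hηm.comp_measurable measurable_fst).norm.mul
        (hηm.comp_measurable measurable_snd).norm).aestronglyMeasurable
    have hfL : MemLp (fun q : Ω₀ × Ω₀ => dist (Y q.1) (Y q.2)) (ENNReal.ofReal 2) (μ.prod μ) := by
      have : (ENNReal.ofReal 2) = (2 : ENNReal) := by norm_num
      rw [this, memLp_two_iff_integrable_sq hfm]
      exact hd2
    have hgL : MemLp (fun q : Ω₀ × Ω₀ => ‖η q.1‖ * ‖η q.2‖) (ENNReal.ofReal 2) (μ.prod μ) := by
      have : (ENNReal.ofReal 2) = (2 : ENNReal) := by norm_num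
      rw [this, memLp_two_iff_integrable_sq hgm]
      exact hg2
    exact integral_mul_le_Lp_mul_Lq_of_nonneg hpq
      (Filter.Eventually.of_forall fun q => dist_nonneg)
      (Filter.Eventually.of_forall fun q => mul_nonneg (norm_nonneg _) (norm_nonneg _))
      hfL hgL
  -- rewrite real powers as natural powers
  have hre1 : ∀ x : ℝ, 0 ≤ x → x ^ (2:ℝ) = x ^ 2 := by
    intro x hx
    rw [show (2:ℝ) = ((2:ℕ):ℝ) by norm_num, Real.rpow_natCast]
  have hrw1 : (∫ q : Ω₀ × Ω₀, dist (Y q.1) (Y q.2) ^ (2:ℝ) ∂(μ.prod μ))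
      = ∫ q : Ω₀ × Ω₀, dist (Y q.1) (Y q.2) ^ 2 ∂(μ.prod μ) := by
    refine integral_congr_ae (Filter.Eventually.of_forall fun q => ?_)
    exact hre1 _ dist_nonneg
  have hrw2 : (∫ q : Ω₀ × Ω₀, (‖η q.1‖ * ‖η q.2‖) ^ (2:ℝ) ∂(μ.prod μ))
      = (∫ ω, ‖η ω‖ ^ 2 ∂μ) ^ 2 := by
    have : (∫ q : Ω₀ × Ω₀, (‖η q.1‖ * ‖η q.2‖) ^ (2:ℝ) ∂(μ.prod μ))
        = ∫ q : Ω₀ × Ω₀, ‖η q.1‖ ^ 2 * ‖η q.2‖ ^ 2 ∂(μ.prod μ) := by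
      refine integral_congr_ae (Filter.Eventually.of_forall fun q => ?_)
      calc (‖η q.1‖ * ‖η q.2‖) ^ (2:ℝ) = (‖η q.1‖ * ‖η q.2‖) ^ (2:ℕ) :=
            hre1 _ (mul_nonneg (norm_nonneg _) (norm_nonneg _))
        _ = ‖η q.1‖ ^ 2 * ‖η q.2‖ ^ 2 := by ring
    rw [this, integral_prod_mul (fun ω => ‖η ω‖ ^ 2) (fun ω => ‖η ω‖ ^ 2), sq]
  have hηint_nonneg : (0:ℝ) ≤ ∫ ω, ‖η ω‖ ^ 2 ∂μ :=
    integral_nonneg fun ω => sq_nonneg _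
  have hd2_nonneg : (0:ℝ) ≤ ∫ q : Ω₀ × Ω₀, dist (Y q.1) (Y q.2) ^ 2 ∂(μ.prod μ) :=
    integral_nonneg fun q => sq_nonneg _
  calc ‖-∫ q : Ω₀ × Ω₀,
          dist (Y q.1) (Y q.2) • ((innerSL ℝ (η q.2)).smulRight (η q.1)) ∂(μ.prod μ)‖
      = ‖∫ q : Ω₀ × Ω₀,
          dist (Y q.1) (Y q.2) • ((innerSL ℝ (η q.2)).smulRight (η q.1)) ∂(μ.prod μ)‖ :=
        norm_neg _
    _ ≤ ∫ q : Ω₀ × Ω₀,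
          ‖dist (Y q.1) (Y q.2) • ((innerSL ℝ (η q.2)).smulRight (η q.1))‖ ∂(μ.prod μ) :=
        norm_integral_le_integral_norm _
    _ = ∫ q : Ω₀ × Ω₀, dist (Y q.1) (Y q.2) * (‖η q.1‖ * ‖η q.2‖) ∂(μ.prod μ) := by
        exact integral_congr_ae (Filter.Eventually.of_forall fun q => hnorm q)
    _ ≤ (∫ q : Ω₀ × Ω₀, dist (Y q.1) (Y q.2) ^ (2:ℝ) ∂(μ.prod μ)) ^ ((1:ℝ)/2) *
        (∫ q : Ω₀ × Ω₀, (‖η q.1‖ * ‖η q.2‖) ^ (2:ℝ) ∂(μ.prod μ)) ^ ((1:ℝ)/2) := hCS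
    _ = (∫ ω, ‖η ω‖ ^ 2 ∂μ) *
          Real.sqrt (∫ q : Ω₀ × Ω₀, dist (Y q.1) (Y q.2) ^ 2 ∂(μ.prod μ)) := by
        rw [hrw1, hrw2, ← Real.rpow_natCast ((∫ ω, ‖η ω‖ ^ 2 ∂μ)) 2,
          ← Real.rpow_mul hηint_nonneg, ← Real.sqrt_eq_rpow]
        push_cast
        rw [show (2:ℝ) * (1/2) = 1 by norm_num, Real.rpow_one]
        ring
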